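/- Let X₁, ..., X_d be independent real-valued random variables and F square-integrable. Let f_S be the fANOVA components of F. Then for distinct subsets S ≠ T of D, the components are orthogonal: E[f_S(X) · f_T(X)] = 0. -/

import Mathlib

open Finset MeasureTheory ProbabilityTheory

namespace FanovaOrtho

variable {d : ℕ}

/-- The mixing map: take coordinates in `A` from the first component, the rest from the second. -/
def mix (A : Finset (Fin d)) (p : (Fin d → ℝ) × (Fin d → ℝ)) : Fin d → ℝ :=
  fun j => if j ∈ A then p.1 j else p.2 j

lemma measurable_mix (A : Finset (Fin d)) : Measurable (mix A) :=
  measurable_pi_lambda _ fun j => by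
    by_cases h : j ∈ A
    · simpa [mix, h] using (show Measurable fun c : (Fin d → ℝ) × (Fin d → ℝ) => c.1 j from
        (measurable_pi_apply j).comp (measurable_fst))
    · simpa [mix, h] using (show Measurable fun c : (Fin d → ℝ) × (Fin d → ℝ) => c.2 j from
        (measurable_pi_apply j).comp (measurable_snd))

/-- Coordinate swap between the two components. -/
def swapC (i : Fin d) (p : (Fin d → ℝ) × (Fin d → ℝ)) : (Fin d → ℝ) × (Fin d → ℝ) :=
  (Function.update p.1 i (p.2 i), Function.update p.2 i (p.1 i))

lemma measurable_swapC (i : Fin d) : Measurable (swapC (d := d) i) := by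
  apply Measurable.prod <;>
  · apply measurable_pi_lambda
    intro j
    simp only [swapC, Function.update_apply]
    by_cases h : j = i
    · simp only [h, if_pos rfl]
      first
      | exact (measurable_pi_apply i).comp measurable_snd
      | exact (measurable_pi_apply i).comp measurable_fst
    · simp only [if_neg h]
      first
      | exact (measurable_pi_apply j).comp measurable_fst
      | exact (measurable_pi_apply j).comp measurable_snd

variable (μ : Fin d → Measure ℝ) [∀ i, IsProbabilityMeasure (μ i)]

lemma mix_mp (A : Finset (Fin d)) :
    MeasurePreserving (mix A) ((Measure.pi μ).prod (Measure.pi μ)) (Measure.pi μ) := by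
  refine ⟨measurable_mix A, ?_⟩
  refine (Measure.pi_eq fun s hs => ?_).symm
  rw [Measure.map_apply (measurable_mix A) (MeasurableSet.univ_pi hs)]
  have hpre : mix A ⁻¹' (Set.univ.pi s) =
      (Set.univ.pi fun j => if j ∈ A then s j else Set.univ) ×ˢ
        (Set.univ.pi fun j => if j ∈ A then Set.univ else s j) := by
    ext p
    simp only [Set.mem_preimage, Set.mem_pi, Set.mem_univ, true_implies, Set.mem_prod, mix]
    constructor
    · intro h
      refine ⟨fun j => ?_, fun j => ?_⟩ <;> by_cases hj : j ∈ A <;>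
        simp only [hj, if_pos, if_neg, if_true, if_false] <;>
        first
        | exact Set.mem_univ _
        | simpa [hj] using h j
    · rintro ⟨h1, h2⟩ j
      by_cases hj : j ∈ A
      · simpa [hj] using h1 j
      · simpa [hj] using h2 j
  rw [hpre, Measure.prod_prod, Measure.pi_pi, Measure.pi_pi, ← Finset.prod_mul_distrib]
  exact Finset.prod_congr rfl fun j _ => by by_cases hj : j ∈ A <;> simp [hj]

lemma swapC_mp (i : Fin d) :
    MeasurePreserving (swapC i) ((Measure.pi μ).prod (Measure.pi μ))
      ((Measure.pi μ).prod (Measure.pi μ)) := by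
  refine ⟨measurable_swapC i, ?_⟩
  haveI : IsProbabilityMeasure (Measure.map (swapC i) ((Measure.pi μ).prod (Measure.pi μ))) :=
    Measure.isProbabilityMeasure_map (measurable_swapC i).aemeasurable
  refine ext_of_generate_finite
    (Set.image2 (· ×ˢ ·)
      (Set.pi Set.univ '' Set.pi Set.univ fun _ => { s : Set ℝ | MeasurableSet s })
      (Set.pi Set.univ '' Set.pi Set.univ fun _ => { s : Set ℝ | MeasurableSet s }))
    ?_ (isPiSystem_pi.prod isPiSystem_pi) ?_ ?_
  · exact (generateFrom_eq_prod generateFrom_pi generateFrom_pi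
      (IsCountablySpanning.pi fun _ => isCountablySpanning_measurableSet)
      (IsCountablySpanning.pi fun _ => isCountablySpanning_measurableSet)).symm
  · rintro _ ⟨_, ⟨s, hs, rfl⟩, _, ⟨t, ht, rfl⟩, rfl⟩
    have hsm : ∀ j, MeasurableSet (s j) := fun j => hs j (Set.mem_univ j)
    have htm : ∀ j, MeasurableSet (t j) := fun j => ht j (Set.mem_univ j)
    rw [Measure.map_apply (measurable_swapC i)
      ((MeasurableSet.univ_pi hsm).prod (MeasurableSet.univ_pi htm))]
    have hpre : swapC i ⁻¹' (Set.univ.pi s ×ˢ Set.univ.pi t) =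
        Set.univ.pi (Function.update s i (t i)) ×ˢ Set.univ.pi (Function.update t i (s i)) := by
      ext ⟨x, y⟩
      simp only [swapC, Set.mem_preimage, Set.mem_prod, Set.mem_pi, Set.mem_univ, true_implies,
        Function.update_apply]
      constructor
      · rintro ⟨h1, h2⟩
        constructor
        · intro j
          rcases eq_or_ne j i with rfl | hj
          · simpa using h2 j
          · simpa [hj] using h1 j
        · intro j
          rcases eq_or_ne j i with rfl | hj
          · simpa using h1 j
          · simpa [hj] using h2 j
      · rintro ⟨h1, h2⟩
        constructor
        · intro j
          rcases eq_or_ne j i with rfl | hj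
          · simpa using h2 j
          · simpa [hj] using h1 j
        · intro j
          rcases eq_or_ne j i with rfl | hj
          · simpa using h1 j
          · simpa [hj] using h2 j
    rw [hpre, Measure.prod_prod, Measure.prod_prod, Measure.pi_pi, Measure.pi_pi,
      Measure.pi_pi, Measure.pi_pi]
    have e1 : (fun j => μ j (Function.update s i (t i) j)) =
        Function.update (fun j => μ j (s j)) i (μ i (t i)) := by
      funext j
      rcases eq_or_ne j i with rfl | hj
      · simp
      · simp [Function.update_apply, hj]
    have e2 : (fun j => μ j (Function.update t i (s i) j)) =
        Function.update (fun j => μ j (t j)) i (μ i (s i)) := by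
      funext j
      rcases eq_or_ne j i with rfl | hj
      · simp
      · simp [Function.update_apply, hj]
    calc (∏ j, μ j (Function.update s i (t i) j)) * ∏ j, μ j (Function.update t i (s i) j)
        = (μ i (t i) * ∏ j ∈ Finset.univ \ {i}, μ j (s j)) *
          (μ i (s i) * ∏ j ∈ Finset.univ \ {i}, μ j (t j)) := by
          rw [e1, e2, Finset.prod_update_of_mem (Finset.mem_univ i),
            Finset.prod_update_of_mem (Finset.mem_univ i)]
      _ = (∏ j, μ j (s j)) * ∏ j, μ j (t j) := by
          rw [← Finset.mul_prod_erase Finset.univ (fun j => μ j (s j)) (Finset.mem_univ i),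
            ← Finset.mul_prod_erase Finset.univ (fun j => μ j (t j)) (Finset.mem_univ i),
            Finset.sdiff_singleton_eq_erase]
          ring
  · simp

lemma fst_mp :
    MeasurePreserving (Prod.fst) ((Measure.pi μ).prod (Measure.pi μ)) (Measure.pi μ) :=
  ⟨measurable_fst, by simp [Measure.map_fst_prod]⟩

lemma integrable_mul_of_L2 {α : Type*} [MeasurableSpace α] {ν : Measure α} {g h : α → ℝ}
    (hg : MemLp g 2 ν) (hh : MemLp h 2 ν) : Integrable (fun x => g x * h x) ν := by
  refine Integrable.mono' ((hg.integrable_sq.add hh.integrable_sq).div_const 2)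
    (hg.aestronglyMeasurable.mul hh.aestronglyMeasurable) (Filter.Eventually.of_forall fun x => ?_)
  simp only [Pi.add_apply]
  rw [Real.norm_eq_abs, abs_mul]
  nlinarith [sq_nonneg (|g x| - |h x|), sq_abs (g x), sq_abs (h x), abs_nonneg (g x),
    abs_nonneg (h x)]

variable {F : (Fin d → ℝ) → ℝ}

/-- The masked conditional mean with respect to the product measure. -/
noncomputable def G (μ : Fin d → Measure ℝ) (F : (Fin d → ℝ) → ℝ) (A : Finset (Fin d)) (x : Fin d → ℝ) : ℝ :=
  ∫ y, F (mix A (x, y)) ∂(Measure.pi μ)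

lemma G_def (A : Finset (Fin d)) (x : Fin d → ℝ) :
    G μ F A x = ∫ y, F (mix A (x, y)) ∂(Measure.pi μ) := rfl

lemma G_sm (hFmeas : Measurable F) (A : Finset (Fin d)) : StronglyMeasurable (G μ F A) :=
  (hFmeas.comp (measurable_mix A)).stronglyMeasurable.integral_prod_right'

lemma G_update (A : Finset (Fin d)) {i : Fin d} (hiA : i ∉ A) (x : Fin d → ℝ) (c : ℝ) :
    G μ F A (Function.update x i c) = G μ F A x := by
  simp only [G_def]
  congr 1
  funext y
  congr 1
  funext j
  simp only [mix]
  by_cases hj : j ∈ A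
  · have hne : j ≠ i := fun h => hiA (h ▸ hj)
    simp [hj, Function.update_apply, hne]
  · simp [hj]

lemma G_memℒp (hFmeas : Measurable F) (hF2 : MemLp F 2 (Measure.pi μ)) (A : Finset (Fin d)) :
    MemLp (G μ F A) 2 (Measure.pi μ) := by
  have hsq : Integrable (fun p => F (mix A p) ^ 2) ((Measure.pi μ).prod (Measure.pi μ)) :=
    (hF2.comp_measurePreserving (mix_mp μ A)).integrable_sq
  refine (memLp_two_iff_integrable_sq (G_sm μ hFmeas A).aestronglyMeasurable).mpr ?_
  have haesm : AEStronglyMeasurable (fun x => G μ F A x ^ 2) (Measure.pi μ) := by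
    simpa [pow_two] using
      (show AEStronglyMeasurable (fun x => G μ F A x * G μ F A x) (Measure.pi μ) from
      ((G_sm μ hFmeas A).aestronglyMeasurable.mul (G_sm μ hFmeas A).aestronglyMeasurable))
  refine Integrable.mono' hsq.integral_prod_left haesm ?_
  filter_upwards [hsq.prod_right_ae] with x hx
  have hsm : AEStronglyMeasurable (fun y => F (mix A (x, y))) (Measure.pi μ) :=
    ((hFmeas.comp (measurable_mix A)).comp measurable_prodMk_left).aestronglyMeasurable
  have hmem : MemLp (fun y => F (mix A (x, y))) 2 (Measure.pi μ) :=
    (memLp_two_iff_integrable_sq hsm).mpr hx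
  have h0 := variance_nonneg (fun y => F (mix A (x, y))) (Measure.pi μ)
  rw [variance_eq_sub hmem] at h0
  simp only [Pi.pow_apply] at h0
  rw [Real.norm_eq_abs, abs_of_nonneg (sq_nonneg _), G_def]
  linarith

lemma key_step (hFmeas : Measurable F) (hF2 : MemLp F 2 (Measure.pi μ)) (i : Fin d)
    (A : Finset (Fin d)) (hiA : i ∉ A) {g : (Fin d → ℝ) → ℝ} (hgm : Measurable g)
    (hgL2 : MemLp g 2 (Measure.pi μ))
    (hgupd : ∀ x c, g (Function.update x i c) = g x) :
    ∫ x, G μ F (insert i A) x * g x ∂(Measure.pi μ)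
      = ∫ x, G μ F A x * g x ∂(Measure.pi μ) := by
  set π : Measure (Fin d → ℝ) := Measure.pi μ with hπ
  have hσ := swapC_mp μ i
  have hΦm : AEStronglyMeasurable (fun p : (Fin d → ℝ) × (Fin d → ℝ) => F (mix A p) * g p.1)
      (π.prod π) :=
    (hFmeas.comp (measurable_mix A)).aestronglyMeasurable.mul
      ((hgm.comp measurable_fst)).aestronglyMeasurable
  have hΦint : Integrable (fun p : (Fin d → ℝ) × (Fin d → ℝ) => F (mix A p) * g p.1)
      (π.prod π) :=
    integrable_mul_of_L2 (hF2.comp_measurePreserving (mix_mp μ A))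
      (hgL2.comp_measurePreserving (fst_mp μ))
  have hcomp : ∀ p : (Fin d → ℝ) × (Fin d → ℝ),
      F (mix A (swapC i p)) * g (swapC i p).1 = F (mix (insert i A) p) * g p.1 := by
    rintro ⟨x, y⟩
    have h1 : mix A (swapC i (x, y)) = mix (insert i A) (x, y) := by
      funext j
      simp only [mix, swapC, Function.update_apply]
      rcases eq_or_ne j i with rfl | hj
      · simp [hiA]
      · by_cases hjA : j ∈ A <;> simp [hjA, hj, Finset.mem_insert]
    have h2 : g (swapC i (x, y)).1 = g x := hgupd x (y i)
    rw [h1, h2]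
  have hΦm' : AEStronglyMeasurable (fun p : (Fin d → ℝ) × (Fin d → ℝ) => F (mix A p) * g p.1)
      (Measure.map (swapC i) (π.prod π)) := by
    rw [hσ.map_eq]; exact hΦm
  have hΨint : Integrable (fun p : (Fin d → ℝ) × (Fin d → ℝ) => F (mix (insert i A) p) * g p.1)
      (π.prod π) := by
    have h := (integrable_map_measure hΦm' (measurable_swapC i).aemeasurable).mp
      (by rw [hσ.map_eq]; exact hΦint)
    refine h.congr (Filter.Eventually.of_forall fun p => ?_)
    exact hcomp p
  have hswap : ∫ p, F (mix (insert i A) p) * g p.1 ∂(π.prod π)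
      = ∫ p, F (mix A p) * g p.1 ∂(π.prod π) := by
    calc ∫ p, F (mix (insert i A) p) * g p.1 ∂(π.prod π)
        = ∫ p, F (mix A (swapC i p)) * g (swapC i p).1 ∂(π.prod π) := by
          refine integral_congr_ae (Filter.Eventually.of_forall fun p => ?_)
          exact (hcomp p).symm
      _ = ∫ p, F (mix A p) * g p.1 ∂(Measure.map (swapC i) (π.prod π)) :=
          (integral_map (measurable_swapC i).aemeasurable hΦm').symm
      _ = ∫ p, F (mix A p) * g p.1 ∂(π.prod π) := by rw [hσ.map_eq]
  calc ∫ x, G μ F (insert i A) x * g x ∂π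
      = ∫ x, ∫ y, F (mix (insert i A) (x, y)) * g x ∂π ∂π := by
        refine integral_congr_ae (Filter.Eventually.of_forall fun x => ?_)
        show G μ F (insert i A) x * g x = ∫ y, F (mix (insert i A) (x, y)) * g x ∂π
        rw [G_def]
        exact (integral_mul_const _ _).symm
    _ = ∫ p, F (mix (insert i A) p) * g p.1 ∂(π.prod π) := (integral_prod _ hΨint).symm
    _ = ∫ p, F (mix A p) * g p.1 ∂(π.prod π) := hswap
    _ = ∫ x, ∫ y, F (mix A (x, y)) * g x ∂π ∂π := integral_prod _ hΦint
    _ = ∫ x, G μ F A x * g x ∂π := by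
        refine integral_congr_ae (Filter.Eventually.of_forall fun x => ?_)
        show (∫ y, F (mix A (x, y)) * g x ∂π) = G μ F A x * g x
        rw [G_def]
        exact integral_mul_const _ _

end FanovaOrtho

open FanovaOrtho

/-- The fANOVA components of `F` are pairwise orthogonal under feature independence. -/
theorem fanova_components_orthogonal
    {Ω : Type*} [MeasureSpace Ω] [IsProbabilityMeasure (ℙ : Measure Ω)]
    (d : ℕ) (X : Ω → (Fin d → ℝ))
    (hX : ∀ i, Measurable fun ω => X ω i)
    (hindep : iIndepFun (fun i ω => X ω i) ℙ)
    (F : (Fin d → ℝ) → ℝ) (hFmeas : Measurable F)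
    (hF : MemLp (fun ω => F (X ω)) 2 ℙ)
    (Fmask : Finset (Fin d) → (Fin d → ℝ) → ℝ)
    (hmask : ∀ S x, Fmask S x = ∫ ω, F (fun i => if i ∈ S then x i else X ω i) ∂ℙ)
    (f : Finset (Fin d) → (Fin d → ℝ) → ℝ)
    (hf : ∀ S x, f S x = ∑ T ∈ S.powerset, (-1 : ℝ) ^ (S.card - T.card) * Fmask T x)
    (S T : Finset (Fin d)) (hST : S ≠ T) :
    ∫ ω, f S (X ω) * f T (X ω) ∂ℙ = 0 := by
  classical
  set μ : Fin d → Measure ℝ := fun j => Measure.map (fun ω => X ω j) ℙ with hμdef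
  haveI hprob : ∀ j, IsProbabilityMeasure (μ j) := fun j =>
    Measure.isProbabilityMeasure_map (hX j).aemeasurable
  set π : Measure (Fin d → ℝ) := Measure.pi μ with hπdef
  have hXm : Measurable X := measurable_pi_lambda _ hX
  -- the law of X is the product measure
  have hmapX : Measure.map X ℙ = π := by
    rw [hπdef]
    symm
    apply Measure.pi_eq
    intro s hs
    rw [Measure.map_apply hXm (MeasurableSet.univ_pi hs)]
    have hXpre : X ⁻¹' Set.univ.pi s = ⋂ j ∈ Finset.univ, (fun ω => X ω j) ⁻¹' s j := by
      ext ω; simp [Set.mem_pi]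
    rw [hXpre, hindep.measure_inter_preimage_eq_mul Finset.univ (fun j _ => hs j)]
    exact Finset.prod_congr rfl fun j _ => (Measure.map_apply (hX j) (hs j)).symm
  -- F is square-integrable for π
  have hFπ : MemLp F 2 π := by
    rw [← hmapX]
    exact (memLp_map_measure_iff hFmeas.aestronglyMeasurable hXm.aemeasurable).mpr hF
  -- identify Fmask with G
  have hmaskG : ∀ A x, Fmask A x = G μ F A x := by
    intro A x
    have hm2 : AEStronglyMeasurable (fun y => F (mix A (x, y))) (Measure.map X ℙ) :=
      ((hFmeas.comp ((measurable_mix A).comp measurable_prodMk_left))).aestronglyMeasurable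
    rw [hmask, G_def, ← hπdef, ← hmapX, integral_map hXm.aemeasurable hm2]
    rfl
  have hfGsum : ∀ (B : Finset (Fin d)) x,
      f B x = ∑ A ∈ B.powerset, (-1 : ℝ) ^ (B.card - A.card) * G μ F A x := by
    intro B x
    rw [hf]
    exact Finset.sum_congr rfl fun A _ => by rw [hmaskG]
  have hfm : ∀ B, Measurable (f B) := by
    intro B
    have : f B = fun x => ∑ A ∈ B.powerset, (-1 : ℝ) ^ (B.card - A.card) * G μ F A x :=
      funext (hfGsum B)
    rw [this]
    exact Finset.measurable_sum _ fun A _ =>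
      (measurable_const.mul (G_sm μ hFmeas A).measurable)
  have hfL2 : ∀ B, MemLp (f B) 2 π := by
    intro B
    have : f B = fun x => ∑ A ∈ B.powerset, (-1 : ℝ) ^ (B.card - A.card) * G μ F A x :=
      funext (hfGsum B)
    rw [this]
    exact memLp_finset_sum _ fun A _ => (G_memℒp μ hFmeas hFπ A).const_mul _
  have hfupd : ∀ (B : Finset (Fin d)) {i : Fin d}, i ∉ B →
      ∀ x c, f B (Function.update x i c) = f B x := by
    intro B i hiB x c
    rw [hfGsum, hfGsum]
    refine Finset.sum_congr rfl fun A hA => ?_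
    have hiA : i ∉ A := fun h => hiB (Finset.mem_powerset.mp hA h)
    rw [G_update μ A hiA]
  -- the core orthogonality, assuming S' has an element not in T'
  have core : ∀ S' T' : Finset (Fin d), (∃ i, i ∈ S' ∧ i ∉ T') →
      ∫ x, f S' x * f T' x ∂π = 0 := by
    rintro S' T' ⟨i, hiS, hiT⟩
    have hiS0 : i ∉ S'.erase i := Finset.notMem_erase i S'
    have hexp : ∫ x, f S' x * f T' x ∂π
        = ∑ A ∈ S'.powerset, (-1 : ℝ) ^ (S'.card - A.card) * ∫ x, G μ F A x * f T' x ∂π := by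
      have hpt : ∀ x, f S' x * f T' x
          = ∑ A ∈ S'.powerset, (-1 : ℝ) ^ (S'.card - A.card) * (G μ F A x * f T' x) := by
        intro x
        rw [hfGsum S' x, Finset.sum_mul]
        exact Finset.sum_congr rfl fun A _ => by ring
      simp_rw [hpt]
      rw [integral_finset_sum _ fun A _ =>
        (integrable_mul_of_L2 (G_memℒp μ hFmeas hFπ A) (hfL2 T')).const_mul _]
      exact Finset.sum_congr rfl fun A _ => integral_const_mul _ _
    rw [hexp, ← Finset.insert_erase hiS, Finset.powerset_insert]
    have hdisj : Disjoint ((S'.erase i).powerset)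
        (((S'.erase i).powerset).image (insert i)) := by
      rw [Finset.disjoint_left]
      rintro A hA hA'
      rcases Finset.mem_image.mp hA' with ⟨B, _, rfl⟩
      exact hiS0 (Finset.mem_powerset.mp hA (Finset.mem_insert_self i B))
    have hinj : ∀ a ∈ (S'.erase i).powerset, ∀ b ∈ (S'.erase i).powerset,
        insert i a = insert i b → a = b := by
      intro a ha b hb hab
      have hia : i ∉ a := fun h => hiS0 (Finset.mem_powerset.mp ha h)
      have hib : i ∉ b := fun h => hiS0 (Finset.mem_powerset.mp hb h)
      rw [← Finset.erase_insert hia, ← Finset.erase_insert hib, hab]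
    rw [Finset.sum_union hdisj, Finset.sum_image hinj, ← Finset.sum_add_distrib]
    refine Finset.sum_eq_zero fun A hA => ?_
    have hiA : i ∉ A := fun h => hiS0 (Finset.mem_powerset.mp hA h)
    have hcard : A.card ≤ (S'.erase i).card :=
      Finset.card_le_card (Finset.mem_powerset.mp hA)
    rw [key_step μ hFmeas hFπ i A hiA (hfm T') (hfL2 T') (fun x c => hfupd T' hiT x c)]
    rw [Finset.card_insert_of_notMem hiS0, Finset.card_insert_of_notMem hiA]
    have h1 : (S'.erase i).card + 1 - A.card = (S'.erase i).card - A.card + 1 := by omega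
    have h2 : (S'.erase i).card + 1 - (A.card + 1) = (S'.erase i).card - A.card := by omega
    rw [h1, h2, pow_succ]
    ring
  -- reduce the ℙ-integral to a π-integral
  have hred : ∫ ω, f S (X ω) * f T (X ω) ∂ℙ = ∫ x, f S x * f T x ∂π := by
    rw [← hmapX, integral_map hXm.aemeasurable
      (show AEStronglyMeasurable (fun x => f S x * f T x) (Measure.map X ℙ) from
      (((hfm S).mul (hfm T)).aestronglyMeasurable))]
  rw [hred]
  by_cases h : ∃ i, i ∈ S ∧ i ∉ T
  · exact core S T h
  · have h' : ∃ i, i ∈ T ∧ i ∉ S := by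
      push_neg at h
      by_contra h2
      push_neg at h2
      exact hST (Finset.Subset.antisymm (fun a ha => h a ha) (fun a ha => h2 a ha))
    have := core T S h'
    calc ∫ x, f S x * f T x ∂π = ∫ x, f T x * f S x ∂π := by
          refine integral_congr_ae (Filter.Eventually.of_forall fun x => ?_)
          ring
      _ = 0 := this
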